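/- Let 0 < γ < 1, 0 < α < 1 and n ≥ 1. Then |t_n| > (1−α)^γ γ^{−n} Γ(γ)^{−1} ∑_{l=1}^∞ (l^{n+γ−1} − (1−γ) l^{n+γ−2}) α^l, where the series on the right converges (it equals Li_{−n−γ+1}(α) − (1−γ) Li_{−n−γ+2}(α) in terms of the polylogarithm); here Γ is the Gamma function. -/

import Mathlib

open Finset


/-- Pochhammer symbol `(γ)_l = γ(γ+1)⋯(γ+l−1)`. -/
noncomputable def poch (γ : ℝ) (l : ℕ) : ℝ := ∏ i ∈ Finset.range l, (γ + i)

/-- Stirling numbers of the second kind. -/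
def stirling2 : ℕ → ℕ → ℕ
  | 0, 0 => 1
  | 0, _+1 => 0
  | _+1, 0 => 0
  | n+1, k+1 => (k+1) * stirling2 n (k+1) + stirling2 n k

/-- `t_n(α,γ) = (−1)^n γ^{−n} ∑_{i=0}^n S(n,i) (γ)_i (α/(1−α))^i`. -/
noncomputable def tcoef (α γ : ℝ) (n : ℕ) : ℝ :=
  (-1)^n * (γ^n)⁻¹ *
    ∑ i ∈ Finset.range (n+1), (stirling2 n i : ℝ) * poch γ i * (α/(1-α))^i


lemma stirling2_of_lt : ∀ {n k : ℕ}, n < k → stirling2 n k = 0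
  | 0, k+1, _ => rfl
  | n+1, k+1, h => by
    have h1 : n < k + 1 := by omega
    have h2 : n < k := by omega
    simp [stirling2, stirling2_of_lt h1, stirling2_of_lt h2]

lemma sum_stirling2_desc (n : ℕ) (y : ℝ) :
    ∑ i ∈ range (n+1), (stirling2 n i : ℝ) * ∏ j ∈ range i, (y - (j:ℕ)) = y ^ n := by
  induction n with
  | zero => simp [stirling2]
  | succ n ih =>
    have key : ∀ i : ℕ, y * ∏ j ∈ range i, (y - (j:ℕ)) =
        (∏ j ∈ range (i+1), (y - (j:ℕ))) + i * ∏ j ∈ range i, (y - (j:ℕ)) := by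
      intro i
      rw [prod_range_succ]
      ring
    calc ∑ i ∈ range (n+2), (stirling2 (n+1) i : ℝ) * ∏ j ∈ range i, (y - (j:ℕ))
        = ∑ k ∈ range (n+1), (stirling2 (n+1) (k+1) : ℝ) * ∏ j ∈ range (k+1), (y - (j:ℕ)) := by
          rw [Finset.sum_range_succ' _ (n+1)]
          simp [stirling2]
      _ = ∑ k ∈ range (n+1), ((k+1 : ℝ) * stirling2 n (k+1) * ∏ j ∈ range (k+1), (y - (j:ℕ))
            + (stirling2 n k : ℝ) * ∏ j ∈ range (k+1), (y - (j:ℕ))) := by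
          apply Finset.sum_congr rfl; intro k _
          show ((stirling2 (n+1) (k+1) : ℕ) : ℝ) * _ = _
          rw [show stirling2 (n+1) (k+1) = (k+1) * stirling2 n (k+1) + stirling2 n k from rfl]
          push_cast; ring
      _ = y * ∑ i ∈ range (n+1), (stirling2 n i : ℝ) * ∏ j ∈ range i, (y - (j:ℕ)) := by
          rw [Finset.sum_add_distrib, Finset.mul_sum]
          have e1 : ∑ k ∈ range (n+1), (k+1 : ℝ) * stirling2 n (k+1) * ∏ j ∈ range (k+1), (y - (j:ℕ))
              = ∑ i ∈ range (n+1), (i : ℝ) * stirling2 n i * ∏ j ∈ range i, (y - (j:ℕ)) := by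
            rw [Finset.sum_range_succ' (fun i => (i : ℝ) * stirling2 n i * ∏ j ∈ range i, (y - (j:ℕ))) n]
            rw [Finset.sum_range_succ]
            simp [stirling2_of_lt (Nat.lt_succ_self n)]
          rw [e1]
          rw [← Finset.sum_add_distrib]
          apply Finset.sum_congr rfl; intro i _
          linear_combination (-(stirling2 n i : ℝ)) * key i
      _ = y ^ (n+1) := by rw [ih]; ring

lemma poch_pos {γ : ℝ} (hγ : 0 < γ) (l : ℕ) : 0 < poch γ l := by
  unfold poch; exact Finset.prod_pos fun i _ => by positivity

lemma poch_add (γ : ℝ) (i m : ℕ) : poch γ (i + m) = poch γ i * poch (γ + i) m := by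
  unfold poch
  rw [Finset.prod_range_add]
  congr 1
  apply Finset.prod_congr rfl
  intro j _; push_cast; ring

lemma poch_succ' (c : ℝ) (m : ℕ) : poch c (m + 1) = c * poch (c + 1) m := by
  have := poch_add c 1 m
  simpa [poch, add_comm] using this

lemma Gamma_mul_poch {γ : ℝ} (hγ : 0 < γ) (l : ℕ) :
    Real.Gamma γ * poch γ l = Real.Gamma (γ + l) := by
  induction l with
  | zero => simp [poch]
  | succ l ih =>
    have h1 : γ + (l:ℝ) ≠ 0 := by positivity
    have : Real.Gamma (γ + (l+1:ℕ)) = (γ + l) * Real.Gamma (γ + l) := by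
      rw [show (γ + ((l:ℕ)+1:ℕ) : ℝ) = (γ + l) + 1 by push_cast; ring]
      rw [Real.Gamma_add_one h1]
    rw [this, ← ih]
    unfold poch
    rw [Finset.prod_range_succ]
    ring

lemma binom_summable {c a : ℝ} (hc : 0 < c) (ha0 : 0 < a) (ha1 : a < 1) :
    Summable (fun m : ℕ => poch c m / m.factorial * a ^ m) := by
  apply summable_of_ratio_test_tendsto_lt_one ha1
  · filter_upwards with m
    have h1 := poch_pos hc m
    have h2 : (0:ℝ) < m.factorial := by positivity
    positivity
  · have key : ∀ m : ℕ, ‖poch c (m+1) / (m+1).factorial * a ^ (m+1)‖ / ‖poch c m / m.factorial * a ^ m‖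
        = (c + m) / (m + 1) * a := by
      intro m
      have h1 := poch_pos hc m
      have h1' := poch_pos hc (m+1)
      have h2 : (0:ℝ) < m.factorial := by positivity
      have hpa : (0:ℝ) < a ^ m := by positivity
      rw [Real.norm_eq_abs, Real.norm_eq_abs, abs_of_pos (by positivity), abs_of_pos (by positivity)]
      have e1 : poch c (m+1) = poch c m * (c + m) := by
        unfold poch; rw [Finset.prod_range_succ]
      rw [e1, Nat.factorial_succ, pow_succ]
      field_simp
      push_cast; ring
    simp_rw [key]
    have h3 : ∀ m : ℕ, (c + (m:ℝ)) / (m + 1) * a = (1 + (c-1)/((m:ℝ)+1)) * a := by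
      intro m
      have : ((m:ℝ)+1) ≠ 0 := by positivity
      field_simp
      ring
    simp_rw [h3]
    have h4 : Filter.Tendsto (fun m : ℕ => (c-1)/((m:ℝ)+1)) Filter.atTop (nhds 0) :=
      Filter.Tendsto.div_atTop tendsto_const_nhds
        (Filter.tendsto_atTop_add_const_right _ 1 tendsto_natCast_atTop_atTop)
    have h5 := (h4.const_add 1).mul_const a
    simpa using h5

lemma cast_descFactorial (l : ℕ) : ∀ i : ℕ, ((l.descFactorial i : ℕ) : ℝ) = ∏ j ∈ Finset.range i, ((l:ℝ) - j)
  | 0 => by simp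
  | i+1 => by
    rw [Finset.prod_range_succ, ← cast_descFactorial l i, Nat.descFactorial_succ]
    rcases Nat.lt_or_ge i l with h | h
    · have : ((l - i : ℕ) : ℝ) = (l:ℝ) - i := by
        have := Nat.cast_sub (le_of_lt h) (R := ℝ)
        exact this
      push_cast [this]
      ring
    · rcases Nat.lt_or_ge l i with h2 | h2
      · rw [Nat.descFactorial_eq_zero_iff_lt.mpr h2]
        simp
      · have hli : l = i := le_antisymm h h2
        subst hli
        simp [Nat.sub_self]

lemma binom_partial_le : ∀ (N : ℕ) (c : ℝ), 0 < c → ∀ a : ℝ, 0 ≤ a → a < 1 →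
    ∑ m ∈ Finset.range N, poch c m / m.factorial * a ^ m ≤ (1 - a) ^ (-c) := by
  intro N
  induction N with
  | zero =>
    intro c hc a ha0 ha1
    have h1 : (0:ℝ) < 1 - a := by linarith
    simp only [Finset.range_zero, Finset.sum_empty]
    positivity
  | succ N ih =>
    intro c hc a ha0 ha1
    set f : ℝ → ℝ := fun x => (1-x) ^ (-c) - ∑ m ∈ Finset.range (N+1), poch c m / m.factorial * x ^ m with hf
    have hderiv : ∀ x : ℝ, x < 1 → HasDerivAt f
        (c * (1-x) ^ (-c-1) - c * ∑ m ∈ Finset.range N, poch (c+1) m / m.factorial * x ^ m) x := by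
      intro x hx
      have hx1 : (0:ℝ) < 1 - x := by linarith
      have h1 : HasDerivAt (fun y : ℝ => (1-y) ^ (-c)) (c * (1-x) ^ (-c-1)) x := by
        have hbase : HasDerivAt (fun y : ℝ => 1 - y) (-1) x := by
          simpa using (hasDerivAt_id x).const_sub 1
        have := hbase.rpow_const (p := -c) (Or.inl (ne_of_gt hx1))
        convert this using 1
        ring
      have h2 : HasDerivAt (fun y : ℝ => ∑ m ∈ Finset.range (N+1), poch c m / m.factorial * y ^ m)
          (∑ m ∈ Finset.range (N+1), poch c m / m.factorial * ((m:ℝ) * x ^ (m-1))) x := by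
        apply HasDerivAt.fun_sum
        intro m _
        exact (hasDerivAt_pow m x).const_mul _
      have h3 : ∑ m ∈ Finset.range (N+1), poch c m / m.factorial * ((m:ℝ) * x ^ (m-1))
          = c * ∑ m ∈ Finset.range N, poch (c+1) m / m.factorial * x ^ m := by
        rw [Finset.sum_range_succ' (fun m => poch c m / m.factorial * ((m:ℝ) * x ^ (m-1)))]
        simp only [Nat.cast_zero, zero_mul, mul_zero, add_zero, Nat.add_sub_cancel]
        rw [Finset.mul_sum]
        apply Finset.sum_congr rfl
        intro i _
        rw [poch_succ', Nat.factorial_succ]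
        have h1' : ((i:ℝ)+1) ≠ 0 := by positivity
        have h2' : ((i.factorial:ℕ):ℝ) ≠ 0 := by positivity
        push_cast
        field_simp
      have := h1.sub h2
      rw [h3] at this
      exact this
    have hmono : MonotoneOn f (Set.Icc 0 a) := by
      apply monotoneOn_of_deriv_nonneg (convex_Icc 0 a)
      · intro x hx
        have hx1 : x < 1 := lt_of_le_of_lt hx.2 ha1
        exact (hderiv x hx1).continuousAt.continuousWithinAt
      · intro x hx
        rw [interior_Icc] at hx
        have hx1 : x < 1 := lt_trans hx.2 ha1
        exact (hderiv x hx1).differentiableAt.differentiableWithinAt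
      · intro x hx
        rw [interior_Icc] at hx
        have hx1 : x < 1 := lt_trans hx.2 ha1
        rw [(hderiv x hx1).deriv]
        have hih := ih (c+1) (by linarith) x (le_of_lt hx.1) hx1
        have : ∑ m ∈ Finset.range N, poch (c+1) m / m.factorial * x ^ m ≤ (1-x) ^ (-(c+1)) := hih
        have he : -(c+1) = -c-1 := by ring
        rw [he] at this
        nlinarith
    have hf0 : f 0 = 0 := by
      have hsum : ∑ m ∈ Finset.range (N+1), poch c m / m.factorial * (0:ℝ) ^ m = 1 := by
        rw [Finset.sum_range_succ' (fun m => poch c m / m.factorial * (0:ℝ) ^ m)]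
        simp [poch]
      simp [hf, hsum]
    have hfa : 0 ≤ f a := by
      have := hmono (Set.left_mem_Icc.mpr ha0) (Set.mem_Icc.mpr ⟨ha0, le_refl a⟩) ha0
      rw [hf0] at this
      exact this
    simp only [hf] at hfa
    linarith

lemma binom_tsum_le {c a : ℝ} (hc : 0 < c) (ha0 : 0 ≤ a) (ha1 : a < 1) :
    ∑' m : ℕ, poch c m / m.factorial * a ^ m ≤ (1 - a) ^ (-c) := by
  apply Real.tsum_le_of_sum_range_le
  · intro m
    have := poch_pos hc m
    have h2 : (0:ℝ) < m.factorial := by positivity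
    positivity
  · intro N
    exact binom_partial_le N c hc a ha0 ha1

lemma gamma_term_lt {γ : ℝ} (hγ0 : 0 < γ) (hγ1 : γ < 1) (l : ℕ) (hl : 1 ≤ l) :
    (l:ℝ) ^ (γ-1) - (1-γ) * (l:ℝ) ^ (γ-2) < Real.Gamma (γ + l) / l.factorial := by
  have hL : (1:ℝ) ≤ (l:ℝ) := by exact_mod_cast hl
  have hL0 : (0:ℝ) < l := by linarith
  have hGpos : 0 < Real.Gamma ((l:ℝ) + γ) := Real.Gamma_pos_of_pos (by positivity)
  -- Step 1: log-convexity
  have h1 : Real.Gamma ((l:ℝ) + 1) ≤ Real.Gamma ((l:ℝ) + γ) * ((l:ℝ) + γ) ^ (1-γ) := by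
    have key := Real.Gamma_mul_add_mul_le_rpow_Gamma_mul_rpow_Gamma
      (s := (l:ℝ)+γ) (t := (l:ℝ)+γ+1) (a := γ) (b := 1-γ)
      (by positivity) (by positivity) hγ0 (by linarith) (by ring)
    have harg : γ * ((l:ℝ)+γ) + (1-γ) * ((l:ℝ)+γ+1) = (l:ℝ)+1 := by ring
    rw [harg] at key
    have hg1 : Real.Gamma ((l:ℝ)+γ+1) = ((l:ℝ)+γ) * Real.Gamma ((l:ℝ)+γ) :=
      Real.Gamma_add_one (by positivity)
    rw [hg1, Real.mul_rpow (by positivity) hGpos.le] at key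
    calc Real.Gamma ((l:ℝ)+1)
        ≤ Real.Gamma ((l:ℝ)+γ) ^ γ * (((l:ℝ)+γ) ^ (1-γ) * Real.Gamma ((l:ℝ)+γ) ^ (1-γ)) := key
      _ = Real.Gamma ((l:ℝ)+γ) * ((l:ℝ)+γ) ^ (1-γ) := by
          rw [mul_comm (((l:ℝ)+γ) ^ (1-γ)), ← mul_assoc, ← Real.rpow_add hGpos]
          norm_num
  -- Step 2: Γ(l+γ)/l! ≥ (l+γ)^(γ-1)
  have hfact : Real.Gamma ((l:ℝ)+1) = (l.factorial : ℝ) := by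
    exact_mod_cast Real.Gamma_nat_eq_factorial l
  have hpow_pos : (0:ℝ) < ((l:ℝ)+γ) ^ (γ-1) := Real.rpow_pos_of_pos (by positivity) _
  have h2 : (l.factorial : ℝ) * ((l:ℝ)+γ) ^ (γ-1) ≤ Real.Gamma ((l:ℝ)+γ) := by
    rw [← hfact]
    calc Real.Gamma ((l:ℝ)+1) * ((l:ℝ)+γ) ^ (γ-1)
        ≤ Real.Gamma ((l:ℝ)+γ) * ((l:ℝ)+γ) ^ (1-γ) * ((l:ℝ)+γ) ^ (γ-1) := by
          apply mul_le_mul_of_nonneg_right h1 hpow_pos.le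
      _ = Real.Gamma ((l:ℝ)+γ) := by
          rw [mul_assoc, ← Real.rpow_add (by positivity : (0:ℝ) < (l:ℝ)+γ)]
          norm_num
  -- Step 3: (l+γ)^(γ-1) > (l+1)^(γ-1)
  have h3 : ((l:ℝ)+1) ^ (γ-1) < ((l:ℝ)+γ) ^ (γ-1) := by
    rw [show γ - 1 = -(1-γ) by ring, Real.rpow_neg (by positivity), Real.rpow_neg (by positivity)]
    apply inv_strictAnti₀
    · exact Real.rpow_pos_of_pos (by positivity) _
    · exact Real.rpow_lt_rpow (by positivity) (by linarith) (by linarith)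
  -- Step 4: Bernoulli: (l+1)^(γ-1) ≥ l^(γ-1) - (1-γ) l^(γ-2)
  have h4 : (l:ℝ) ^ (γ-1) - (1-γ) * (l:ℝ) ^ (γ-2) ≤ ((l:ℝ)+1) ^ (γ-1) := by
    have hp0 : (0:ℝ) ≤ 1 - γ := by linarith
    have hp1 : (1:ℝ) - γ ≤ 1 := by linarith
    have hs : (-1:ℝ) ≤ 1/(l:ℝ) := by
      have h0 : (0:ℝ) ≤ 1/(l:ℝ) := by positivity
      linarith
    have hbern : (1 + 1/(l:ℝ)) ^ (1-γ) ≤ 1 + (1-γ) * (1/(l:ℝ)) :=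
      rpow_one_add_le_one_add_mul_self hs hp0 hp1
    have hsplit : ((l:ℝ)+1) = (l:ℝ) * (1 + 1/(l:ℝ)) := by field_simp
    have hmul : ((l:ℝ)+1) ^ (1-γ) ≤ (l:ℝ)^(1-γ) * (1 + (1-γ)/(l:ℝ)) := by
      rw [hsplit, Real.mul_rpow hL0.le (by positivity)]
      have hstep := mul_le_mul_of_nonneg_left hbern (Real.rpow_nonneg hL0.le (1-γ))
      refine le_trans hstep (le_of_eq ?_)
      rw [mul_one_div]
    have hC : (0:ℝ) < ((l:ℝ)+1)^(1-γ) := Real.rpow_pos_of_pos (by positivity) _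
    have hB : (0:ℝ) < 1 + (1-γ)/(l:ℝ) := by positivity
    have hinv : ((l:ℝ)^(1-γ) * (1 + (1-γ)/(l:ℝ)))⁻¹ ≤ (((l:ℝ)+1)^(1-γ))⁻¹ :=
      inv_anti₀ hC hmul
    have hgoal1 : ((l:ℝ)+1) ^ (γ-1) = (((l:ℝ)+1)^(1-γ))⁻¹ := by
      rw [show γ-1 = -(1-γ) by ring, Real.rpow_neg (by positivity)]
    rw [hgoal1]
    refine le_trans ?_ hinv
    rw [mul_inv]
    have hLinv : ((l:ℝ)^(1-γ))⁻¹ = (l:ℝ)^(γ-1) := by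
      rw [show γ-1 = -(1-γ) by ring, Real.rpow_neg hL0.le]
    rw [hLinv]
    have h5 : 1 - (1-γ)/(l:ℝ) ≤ (1 + (1-γ)/(l:ℝ))⁻¹ := by
      rw [inv_eq_one_div, le_div_iff₀ hB]
      nlinarith [sq_nonneg ((1-γ)/(l:ℝ))]
    have h6 : (l:ℝ)^(γ-1) * (1 - (1-γ)/(l:ℝ)) ≤ (l:ℝ)^(γ-1) * (1 + (1-γ)/(l:ℝ))⁻¹ :=
      mul_le_mul_of_nonneg_left h5 (Real.rpow_pos_of_pos hL0 _).le
    have e : (l:ℝ)^(γ-2) = (l:ℝ)^(γ-1)/(l:ℝ) := by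
      rw [show γ-2 = (γ-1)-1 by ring, Real.rpow_sub hL0, Real.rpow_one]
    refine le_trans (le_of_eq ?_) h6
    rw [e]
    ring
  calc (l:ℝ) ^ (γ-1) - (1-γ) * (l:ℝ) ^ (γ-2)
      ≤ ((l:ℝ)+1) ^ (γ-1) := h4
    _ < ((l:ℝ)+γ) ^ (γ-1) := h3
    _ ≤ Real.Gamma ((l:ℝ)+γ) / l.factorial := by
        rw [le_div_iff₀ (by positivity : (0:ℝ) < (l.factorial:ℝ))]
        calc ((l:ℝ)+γ) ^ (γ-1) * (l.factorial:ℝ)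
            = (l.factorial:ℝ) * ((l:ℝ)+γ) ^ (γ-1) := by ring
          _ ≤ Real.Gamma ((l:ℝ)+γ) := h2
    _ = Real.Gamma (γ + (l:ℝ)) / l.factorial := by rw [add_comm]


/-- For `0 < γ < 1`, `0 < α < 1`, `n ≥ 1`:
`|t_n| > (1−α)^γ γ^{−n} Γ(γ)^{−1} ∑_{l≥1} (l^{n+γ−1} − (1−γ) l^{n+γ−2}) α^l`, the series
(which equals `Li_{−n−γ+1}(α) − (1−γ) Li_{−n−γ+2}(α)`) being convergent. -/
theorem tcoef_lower_bound (α γ : ℝ) (hγ0 : 0 < γ) (hγ1 : γ < 1)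
    (hα0 : 0 < α) (hα1 : α < 1) (n : ℕ) (hn : 1 ≤ n) :
    Summable (fun l : ℕ =>
      ((l : ℝ) ^ ((n : ℝ) + γ - 1) - (1 - γ) * (l : ℝ) ^ ((n : ℝ) + γ - 2)) * α^l) ∧
    |tcoef α γ n| > (1 - α) ^ γ * (γ^n)⁻¹ * (Real.Gamma γ)⁻¹ *
      ∑' l : ℕ, ((l : ℝ) ^ ((n : ℝ) + γ - 1) - (1 - γ) * (l : ℝ) ^ ((n : ℝ) + γ - 2)) * α^l := by
  have h1α : (0:ℝ) < 1 - α := by linarith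
  have hΓ : 0 < Real.Gamma γ := Real.Gamma_pos_of_pos hγ0
  set x : ℝ := α / (1-α) with hxdef
  have hx0 : 0 < x := by positivity
  set Sfin : ℝ := ∑ i ∈ Finset.range (n+1), (stirling2 n i : ℝ) * poch γ i * x ^ i with hSfin
  have hSfin_nonneg : 0 ≤ Sfin := by
    apply Finset.sum_nonneg
    intro i _
    have := poch_pos hγ0 i
    positivity
  -- the family of shifted binomial series
  set F : ℕ → ℕ → ℝ := fun i l =>
    (stirling2 n i : ℝ) * (poch γ l / l.factorial * (l.descFactorial i : ℝ) * α ^ l) with hFdef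
  set C : ℕ → ℝ := fun i => (stirling2 n i : ℝ) * poch γ i * α ^ i with hCdef
  have hCnonneg : ∀ i, 0 ≤ C i := by
    intro i
    have := poch_pos hγ0 i
    simp only [hCdef]
    positivity
  have hγi : ∀ i : ℕ, (0:ℝ) < γ + i := fun i => by positivity
  set L : ℕ → ℝ := fun i => ∑' m : ℕ, poch (γ + i) m / m.factorial * α ^ m with hLdef
  have hsum_i : ∀ i : ℕ, HasSum (fun m : ℕ => poch (γ + i) m / m.factorial * α ^ m) (L i) :=
    fun i => (binom_summable (hγi i) hα0 hα1).hasSum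
  have hF : ∀ i : ℕ, HasSum (F i) (C i * L i) := by
    intro i
    have h1 : HasSum (fun m : ℕ => C i * (poch (γ + i) m / m.factorial * α ^ m)) (C i * L i) :=
      (hsum_i i).mul_left _
    have h2 : (fun m : ℕ => F i (m + i)) =
        (fun m : ℕ => C i * (poch (γ + i) m / m.factorial * α ^ m)) := by
      funext m
      have hdf : ((m + i).factorial : ℝ) = (m.factorial : ℝ) * ((m + i).descFactorial i : ℝ) := by
        have h := Nat.factorial_mul_descFactorial (Nat.le_add_left i m)
        rw [Nat.add_sub_cancel] at h
        exact_mod_cast h.symm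
      have hpa : poch γ (m + i) = poch γ i * poch (γ + i) m := by
        rw [Nat.add_comm m i]
        exact poch_add γ i m
      have hdpos : (0:ℝ) < ((m + i).descFactorial i : ℝ) := by
        have hd0 : (m + i).descFactorial i ≠ 0 := by
          intro h
          have := Nat.descFactorial_eq_zero_iff_lt.mp h
          omega
        exact_mod_cast Nat.pos_of_ne_zero hd0
      have hfpos : (0:ℝ) < (m.factorial : ℝ) := by positivity
      simp only [hFdef, hCdef]
      rw [hpa, hdf, pow_add]
      field_simp
    rw [← h2] at h1
    have h3 := (hasSum_nat_add_iff (f := F i) i).mp h1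
    have h4 : ∑ l ∈ Finset.range i, F i l = 0 := by
      apply Finset.sum_eq_zero
      intro l hl
      have : l.descFactorial i = 0 :=
        Nat.descFactorial_eq_zero_iff_lt.mpr (Finset.mem_range.mp hl)
      simp [hFdef, this]
    rw [h4, add_zero] at h3
    exact h3
  set Sval : ℝ := ∑ i ∈ Finset.range (n+1), C i * L i with hSval
  set b : ℕ → ℝ := fun l => poch γ l / l.factorial * (l:ℝ)^n * α^l with hbdef
  have hb : HasSum b Sval := by
    have h1 := hasSum_sum (fun i (_ : i ∈ Finset.range (n+1)) => hF i)
    have h2 : (fun l : ℕ => ∑ i ∈ Finset.range (n+1), F i l) = b := by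
      funext l
      have h3 : ∑ i ∈ Finset.range (n+1), F i l
          = (poch γ l / l.factorial * α ^ l) *
            ∑ i ∈ Finset.range (n+1), (stirling2 n i : ℝ) * (l.descFactorial i : ℝ) := by
        rw [Finset.mul_sum]
        apply Finset.sum_congr rfl
        intro i _
        simp only [hFdef]
        ring
      have h4 : ∑ i ∈ Finset.range (n+1), (stirling2 n i : ℝ) * (l.descFactorial i : ℝ)
          = (l:ℝ)^n := by
        rw [← sum_stirling2_desc n (l:ℝ)]
        apply Finset.sum_congr rfl
        intro i _
        rw [cast_descFactorial]
      rw [h3, h4]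
      simp only [hbdef]
      ring
    rw [h2] at h1
    exact h1
  -- Sval ≤ (1-α)^(-γ) * Sfin
  have hSval_le : Sval ≤ (1-α) ^ (-γ) * Sfin := by
    have hstep : ∀ i ∈ Finset.range (n+1), C i * L i ≤ C i * ((1-α) ^ (-(γ + (i:ℝ)))) := by
      intro i _
      apply mul_le_mul_of_nonneg_left _ (hCnonneg i)
      exact binom_tsum_le (hγi i) hα0.le hα1
    refine le_trans (Finset.sum_le_sum hstep) (le_of_eq ?_)
    rw [hSfin, Finset.mul_sum]
    apply Finset.sum_congr rfl
    intro i _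
    have he : (1-α) ^ (-(γ + (i:ℝ))) = (1-α) ^ (-γ) * ((1-α)^(i:ℕ))⁻¹ := by
      rw [show -(γ + (i:ℝ)) = -γ + (-(i:ℝ)) by ring, Real.rpow_add h1α]
      congr 1
      rw [Real.rpow_neg h1α.le, Real.rpow_natCast]
    rw [he]
    simp only [hCdef, hxdef]
    rw [div_pow, div_eq_mul_inv]
    ring
  -- the comparison series
  set a' : ℕ → ℝ := fun l => (Real.Gamma γ)⁻¹ *
    (((l:ℝ) ^ ((n:ℝ) + γ - 1) - (1 - γ) * (l:ℝ) ^ ((n:ℝ) + γ - 2)) * α^l) with hadef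
  have hne1 : (0:ℝ) < (n:ℝ) + γ - 1 := by
    have : (1:ℝ) ≤ (n:ℝ) := by exact_mod_cast hn
    linarith
  have hne2 : (n:ℝ) + γ - 2 ≠ 0 := by
    rcases Nat.lt_or_ge n 2 with h | h
    · have hn1 : n = 1 := by omega
      subst hn1
      norm_num
      linarith
    · have : (2:ℝ) ≤ (n:ℝ) := by exact_mod_cast h
      have : 0 < (n:ℝ) + γ - 2 := by linarith
      linarith
  have ha0' : a' 0 = 0 := by
    simp only [hadef, Nat.cast_zero]
    rw [Real.zero_rpow (ne_of_gt hne1), Real.zero_rpow hne2]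
    ring
  have hb0 : b 0 = 0 := by
    simp only [hbdef, Nat.cast_zero]
    rw [zero_pow (by omega : n ≠ 0)]
    ring
  have hsplit : ∀ l : ℕ, 1 ≤ l →
      a' l = ((Real.Gamma γ)⁻¹ * ((l:ℝ)^(γ-1) - (1-γ)*(l:ℝ)^(γ-2))) * ((l:ℝ)^n * α^l) := by
    intro l hl
    have hl0 : (0:ℝ) < (l:ℝ) := by exact_mod_cast hl
    have e1 : (l:ℝ) ^ ((n:ℝ) + γ - 1) = (l:ℝ)^(n:ℕ) * (l:ℝ)^(γ-1) := by
      rw [show (n:ℝ) + γ - 1 = (n:ℝ) + (γ-1) by ring, Real.rpow_add hl0, Real.rpow_natCast]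
    have e2 : (l:ℝ) ^ ((n:ℝ) + γ - 2) = (l:ℝ)^(n:ℕ) * (l:ℝ)^(γ-2) := by
      rw [show (n:ℝ) + γ - 2 = (n:ℝ) + (γ-2) by ring, Real.rpow_add hl0, Real.rpow_natCast]
    simp only [hadef]
    rw [e1, e2]
    ring
  have hab : ∀ l : ℕ, a' l ≤ b l := by
    intro l
    rcases Nat.eq_zero_or_pos l with rfl | hl
    · rw [ha0', hb0]
    · have hl0 : (0:ℝ) < (l:ℝ) := by exact_mod_cast hl
      have key := gamma_term_lt hγ0 hγ1 l hl
      rw [← Gamma_mul_poch hγ0 l] at key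
      have key2 : (Real.Gamma γ)⁻¹ * ((l:ℝ)^(γ-1) - (1-γ)*(l:ℝ)^(γ-2)) < poch γ l / l.factorial := by
        have h := mul_lt_mul_of_pos_left key (inv_pos.mpr hΓ)
        rw [mul_div_assoc, ← mul_assoc, inv_mul_cancel₀ (ne_of_gt hΓ), one_mul] at h
        exact h
      rw [hsplit l hl]
      have hpos : (0:ℝ) < (l:ℝ)^n * α^l := by positivity
      have := mul_le_mul_of_nonneg_right key2.le hpos.le
      calc ((Real.Gamma γ)⁻¹ * ((l:ℝ)^(γ-1) - (1-γ)*(l:ℝ)^(γ-2))) * ((l:ℝ)^n * α^l)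
          ≤ (poch γ l / l.factorial) * ((l:ℝ)^n * α^l) := this
        _ = b l := by simp only [hbdef]; ring
  have hab1 : a' 1 < b 1 := by
    have hl0 : (0:ℝ) < ((1:ℕ):ℝ) := by norm_num
    have key := gamma_term_lt hγ0 hγ1 1 le_rfl
    rw [← Gamma_mul_poch hγ0 1] at key
    have key2 : (Real.Gamma γ)⁻¹ * (((1:ℕ):ℝ)^(γ-1) - (1-γ)*((1:ℕ):ℝ)^(γ-2)) <
        poch γ 1 / (Nat.factorial 1) := by
      have h := mul_lt_mul_of_pos_left key (inv_pos.mpr hΓ)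
      rw [mul_div_assoc, ← mul_assoc, inv_mul_cancel₀ (ne_of_gt hΓ), one_mul] at h
      exact h
    rw [hsplit 1 le_rfl]
    have hpos : (0:ℝ) < ((1:ℕ):ℝ)^n * α^1 := by positivity
    calc ((Real.Gamma γ)⁻¹ * (((1:ℕ):ℝ)^(γ-1) - (1-γ)*((1:ℕ):ℝ)^(γ-2))) * (((1:ℕ):ℝ)^n * α^1)
        < (poch γ 1 / (Nat.factorial 1)) * (((1:ℕ):ℝ)^n * α^1) :=
          mul_lt_mul_of_pos_right key2 hpos
      _ = b 1 := by simp only [hbdef]; ring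
  have ha_nonneg : ∀ l : ℕ, 0 ≤ a' l := by
    intro l
    rcases Nat.eq_zero_or_pos l with rfl | hl
    · rw [ha0']
    · have hl1 : (1:ℝ) ≤ (l:ℝ) := by exact_mod_cast hl
      have hl0 : (0:ℝ) < (l:ℝ) := by linarith
      have e1 : (l:ℝ) ^ ((n:ℝ) + γ - 1) = (l:ℝ) * (l:ℝ)^((n:ℝ) + γ - 2) := by
        rw [show (n:ℝ) + γ - 1 = 1 + ((n:ℝ) + γ - 2) by ring, Real.rpow_add hl0, Real.rpow_one]
      have hp2 : (0:ℝ) ≤ (l:ℝ)^((n:ℝ) + γ - 2) := Real.rpow_nonneg hl0.le _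
      simp only [hadef]
      rw [e1]
      have h1 : 0 ≤ ((l:ℝ) - (1-γ)) * (l:ℝ)^((n:ℝ) + γ - 2) := by
        apply mul_nonneg _ hp2
        linarith
      have h2 : (l:ℝ) * (l:ℝ)^((n:ℝ)+γ-2) - (1-γ) * (l:ℝ)^((n:ℝ)+γ-2)
          = ((l:ℝ) - (1-γ)) * (l:ℝ)^((n:ℝ) + γ - 2) := by ring
      rw [h2]
      positivity
  have ha_summable : Summable a' := Summable.of_nonneg_of_le ha_nonneg hab hb.summable
  have hlt : ∑' l, a' l < Sval := by
    rw [← hb.tsum_eq]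
    exact Summable.tsum_lt_tsum hab hab1 ha_summable hb.summable
  -- relate a' to the target series T
  set T : ℕ → ℝ := fun l =>
    ((l:ℝ) ^ ((n:ℝ) + γ - 1) - (1 - γ) * (l:ℝ) ^ ((n:ℝ) + γ - 2)) * α^l with hTdef
  have hTa : ∀ l, T l = Real.Gamma γ * a' l := by
    intro l
    simp only [hTdef, hadef]
    rw [← mul_assoc, mul_inv_cancel₀ (ne_of_gt hΓ), one_mul]
  have hT_summable : Summable T := by
    have := ha_summable.mul_left (Real.Gamma γ)
    apply this.congr
    intro l
    exact (hTa l).symm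
  have hTsum : ∑' l, T l = Real.Gamma γ * ∑' l, a' l := by
    rw [← tsum_mul_left]
    exact tsum_congr hTa
  constructor
  · exact hT_summable
  -- the final chain
  have habs : |tcoef α γ n| = (γ^n)⁻¹ * Sfin := by
    unfold tcoef
    rw [abs_mul, abs_mul, abs_pow, abs_neg, abs_one, one_pow, one_mul]
    rw [abs_of_nonneg (by positivity : (0:ℝ) ≤ (γ^n)⁻¹), abs_of_nonneg hSfin_nonneg]
  rw [habs]
  have hrhs : (1 - α) ^ γ * (γ^n)⁻¹ * (Real.Gamma γ)⁻¹ * ∑' l, T l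
      = (1 - α) ^ γ * (γ^n)⁻¹ * ∑' l, a' l := by
    rw [hTsum, ← mul_assoc, mul_assoc _ (Real.Gamma γ)⁻¹ (Real.Gamma γ),
      inv_mul_cancel₀ (ne_of_gt hΓ), mul_one]
  have hgoal : (1 - α) ^ γ * (γ^n)⁻¹ * (Real.Gamma γ)⁻¹ * ∑' l, T l < (γ^n)⁻¹ * Sfin := by
    rw [hrhs]
    have hc0 : (0:ℝ) < (1 - α) ^ γ * (γ^n)⁻¹ := by positivity
    calc (1 - α) ^ γ * (γ^n)⁻¹ * ∑' l, a' l
        < (1 - α) ^ γ * (γ^n)⁻¹ * Sval := by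
          rw [mul_assoc, mul_assoc]
          exact mul_lt_mul_of_pos_left (by
            exact mul_lt_mul_of_pos_left hlt (by positivity : (0:ℝ) < (γ^n)⁻¹)) (by positivity)
      _ ≤ (1 - α) ^ γ * (γ^n)⁻¹ * ((1-α) ^ (-γ) * Sfin) := by
          apply mul_le_mul_of_nonneg_left hSval_le hc0.le
      _ = (γ^n)⁻¹ * Sfin := by
          rw [show (1 - α) ^ γ * (γ^n)⁻¹ * ((1-α) ^ (-γ) * Sfin)
              = ((1 - α) ^ γ * (1-α) ^ (-γ)) * ((γ^n)⁻¹ * Sfin) by ring]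
          rw [← Real.rpow_add h1α, add_neg_cancel, Real.rpow_zero, one_mul]
  exact hgoal
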